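/- arXiv:2510.04504 — 4 statements merged into one kernel-verified Lean document; each statement's English description precedes it below -/
import Mathlib

section
/- Let T > 0 be a real number and let f : ℝ → ℝ be continuous on [0, T] and concave on [0, T], with f(0) = T and f(T) = 0. Then for every i₀ with 0 < i₀ < T and every t₀ with T − i₀ ≤ t₀ ≤ f(i₀), there exist real constants a ∈ [0, i₀] and b such that f(i₀ − a) + b = t₀ and f(T − a) + b = 0. -/
/-- Existence of shift constants `a, b` such that the shifted concave scheduler
`i ↦ f (i - a) + b` passes through `(i₀, t₀)` and satisfies `f (T - a) + b = 0`. -/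
theorem stmt_0 (T : ℝ) (hT : 0 < T) (f : ℝ → ℝ)
    (hcont : ContinuousOn f (Set.Icc 0 T))
    (hconc : ConcaveOn ℝ (Set.Icc 0 T) f)
    (hf0 : f 0 = T) (hfT : f T = 0) :
    ∀ i₀ : ℝ, 0 < i₀ → i₀ < T →
      ∀ t₀ : ℝ, T - i₀ ≤ t₀ → t₀ ≤ f i₀ →
        ∃ a b : ℝ, a ∈ Set.Icc (0 : ℝ) i₀ ∧
          f (i₀ - a) + b = t₀ ∧ f (T - a) + b = 0 := by
  intro i₀ hi₀ hi₀T t₀ ht₀l ht₀u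
  set g : ℝ → ℝ := fun a => f (i₀ - a) - f (T - a) with hg
  have hsub1 : ∀ a ∈ Set.Icc (0:ℝ) i₀, i₀ - a ∈ Set.Icc (0:ℝ) T := by
    intro a ha
    constructor <;> simp at ha ⊢ <;> nlinarith [ha.1, ha.2]
  have hsub2 : ∀ a ∈ Set.Icc (0:ℝ) i₀, T - a ∈ Set.Icc (0:ℝ) T := by
    intro a ha
    constructor <;> simp at ha ⊢ <;> nlinarith [ha.1, ha.2]
  have hgc : ContinuousOn g (Set.Icc 0 i₀) := by
    apply ContinuousOn.sub
    · exact hcont.comp (by fun_prop) hsub1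
    · exact hcont.comp (by fun_prop) hsub2
  have hkey : i₀ ≤ f (T - i₀) := by
    have hb : (0:ℝ) ≤ (T - i₀) / T := div_nonneg (by linarith) hT.le
    have hab : i₀ / T + (T - i₀) / T = 1 := by field_simp; ring
    have h := hconc.2 (Set.mem_Icc.mpr ⟨le_refl 0, hT.le⟩)
      (Set.mem_Icc.mpr ⟨hT.le, le_refl T⟩)
      (show (0:ℝ) ≤ i₀ / T by positivity) hb hab
    have e : (i₀ / T) • (0:ℝ) + ((T - i₀) / T) • T = T - i₀ := by
      rw [smul_eq_mul, smul_eq_mul, mul_zero, zero_add, div_mul_cancel₀ _ hT.ne']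
    rw [e, hf0, hfT] at h
    simp only [smul_eq_mul, mul_zero, add_zero] at h
    have : i₀ / T * T = i₀ := by field_simp
    linarith
  have h0 : t₀ ≤ g 0 := by simp [hg, hfT]; linarith
  have h1 : g i₀ ≤ t₀ := by
    simp only [hg, sub_self, hf0]
    linarith
  have : t₀ ∈ g '' Set.Icc 0 i₀ :=
    intermediate_value_Icc' (le_of_lt hi₀) hgc ⟨h1, h0⟩
  obtain ⟨a, ha, hga⟩ := this
  exact ⟨a, -f (T - a), ha, by simpa [hg, sub_eq_add_neg] using hga, by ring⟩
end

section
/- Let T > 0 be a real number and let f : ℝ → ℝ be continuous on [0, T] and strictly concave on [0, T], with f(0) = T and f(T) = 0. Then for every i₀ with 0 < i₀ < T and every t₀ with T − i₀ ≤ t₀ ≤ f(i₀), the pair of real constants (a, b) with a ∈ [0, i₀] satisfying f(i₀ − a) + b = t₀ and f(T − a) + b = 0 is unique: if (a₁, b₁) and (a₂, b₂) both satisfy these two equations with a₁, a₂ ∈ [0, i₀], then a₁ = a₂ and b₁ = b₂. -/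
/-- Strict concavity implies strict decrease of forward differences. -/
lemma aux_diff (T : ℝ) (f : ℝ → ℝ) (hconc : StrictConcaveOn ℝ (Set.Icc 0 T) f)
    (x y c : ℝ) (hxy : x < y) (hc : 0 < c)
    (hx : x ∈ Set.Icc 0 T) (hyc : y + c ∈ Set.Icc 0 T) :
    f x + f (y + c) < f y + f (x + c) := by
  set d := y - x + c with hd
  have hdpos : 0 < d := by simp [hd]; linarith
  set l := c / d with hl
  have hl0 : 0 < l := div_pos hc hdpos
  have hl1 : l < 1 := (div_lt_one hdpos).2 (by linarith)
  have hsum : l + (1 - l) = 1 := by ring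
  have hne : x ≠ y + c := by linarith
  have h1 := hconc.2 hx hyc hne hl0 (by linarith) hsum
  have h2 := hconc.2 hx hyc hne (by linarith : (0:ℝ) < 1 - l) hl0 (by ring)
  have e1 : l • x + (1 - l) • (y + c) = y := by
    field_simp [hl, smul_eq_mul]
    linear_combination -(div_mul_cancel₀ c hdpos.ne') - d * hl + l * hd
  have e2 : (1 - l) • x + l • (y + c) = x + c := by
    field_simp [hl, smul_eq_mul]
    linear_combination (div_mul_cancel₀ c hdpos.ne') + d * hl - l * hd
  rw [e1] at h1
  rw [e2] at h2
  simp only [smul_eq_mul] at h1 h2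
  nlinarith

/-- Uniqueness of the shift constants `(a, b)` for a strictly concave scheduler. -/
theorem stmt_1 (T : ℝ) (hT : 0 < T) (f : ℝ → ℝ)
    (hcont : ContinuousOn f (Set.Icc 0 T))
    (hconc : StrictConcaveOn ℝ (Set.Icc 0 T) f)
    (hf0 : f 0 = T) (hfT : f T = 0) :
    ∀ i₀ : ℝ, 0 < i₀ → i₀ < T →
      ∀ t₀ : ℝ, T - i₀ ≤ t₀ → t₀ ≤ f i₀ →
        ∀ a₁ b₁ a₂ b₂ : ℝ,
          a₁ ∈ Set.Icc (0 : ℝ) i₀ → a₂ ∈ Set.Icc (0 : ℝ) i₀ →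
          f (i₀ - a₁) + b₁ = t₀ → f (T - a₁) + b₁ = 0 →
          f (i₀ - a₂) + b₂ = t₀ → f (T - a₂) + b₂ = 0 →
          a₁ = a₂ ∧ b₁ = b₂ := by
  intro i₀ hi0 hiT t₀ ht1 ht2 a₁ b₁ a₂ b₂ ha₁ ha₂ e11 e12 e21 e22
  have hc : 0 < T - i₀ := by linarith
  have key : ∀ a a' : ℝ, a ∈ Set.Icc (0:ℝ) i₀ → a' ∈ Set.Icc (0:ℝ) i₀ → a < a' →
      f (i₀ - a') + f (T - a) < f (i₀ - a) + f (T - a') := by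
    intro a a' ha ha' hlt
    obtain ⟨h1, h2⟩ := ha
    obtain ⟨h1', h2'⟩ := ha'
    have := aux_diff T f hconc (i₀ - a') (i₀ - a) (T - i₀) (by linarith) hc
      (by constructor <;> simp <;> linarith) (by constructor <;> simp <;> linarith)
    have e : i₀ - a + (T - i₀) = T - a := by ring
    have e' : i₀ - a' + (T - i₀) = T - a' := by ring
    rw [e, e'] at this
    linarith
  have ha : a₁ = a₂ := by
    rcases lt_trichotomy a₁ a₂ with h | h | h
    · have := key a₁ a₂ ha₁ ha₂ h; linarith
    · exact h
    · have := key a₂ a₁ ha₂ ha₁ h; linarith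
  subst ha
  constructor
  · rfl
  · linarith
end

section
/- Let T > 0 be a real number, let f : ℝ → ℝ be concave on [0, T] with f(0) = T and f(T) = 0, and let i₀ satisfy 0 < i₀ < T. Define g : [0, i₀] → ℝ by g(a) = f(i₀ − a) − f(T − a). Then for every a ∈ [0, i₀], T − f(T − i₀) ≤ g(a) ≤ f(i₀); moreover g(0) = f(i₀) and g(i₀) = T − f(T − i₀), and T − f(T − i₀) ≤ T − i₀ ≤ f(i₀). -/
lemma concave_four {T : ℝ} {f : ℝ → ℝ} (h : ConcaveOn ℝ (Set.Icc 0 T) f)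
    {x y c : ℝ} (hx : x ∈ Set.Icc 0 T) (hyc : y + c ∈ Set.Icc 0 T)
    (hxy : x ≤ y) (hc : 0 ≤ c) : f x + f (y + c) ≤ f (x + c) + f y := by
  rcases eq_or_lt_of_le (show x ≤ y + c by linarith) with heq | hlt
  · have hy : y = x := by linarith [hc, hxy, heq.symm ▸ (le_refl x)]
    have hc0 : c = 0 := by linarith
    simp [hy, hc0]
  · set d := y + c - x with hd
    have hd0 : 0 < d := by simp [hd]; linarith
    set t := c / d with ht
    have ht0 : 0 ≤ t := div_nonneg hc hd0.le
    have ht1 : t ≤ 1 := by rw [ht, div_le_one hd0]; linarith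
    have h1 : f (x + c) ≥ (1 - t) * f x + t * f (y + c) := by
      have := h.2 hx hyc (show (0:ℝ) ≤ 1 - t by linarith) ht0 (by ring)
      have harg : (1 - t) • x + t • (y + c) = x + c := by
        simp only [smul_eq_mul]
        rw [ht, hd]
        have hne : y + c - x ≠ 0 := by linarith
        field_simp
        ring
      rw [harg] at this
      simpa [smul_eq_mul] using this
    have h2 : f y ≥ t * f x + (1 - t) * f (y + c) := by
      have := h.2 hx hyc ht0 (show (0:ℝ) ≤ 1 - t by linarith) (by ring)
      have harg : t • x + (1 - t) • (y + c) = y := by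
        simp only [smul_eq_mul]
        rw [ht, hd]
        have hne : y + c - x ≠ 0 := by linarith
        field_simp
        ring
      rw [harg] at this
      simpa [smul_eq_mul] using this
    linarith

lemma chord_lb {T : ℝ} (hT : 0 < T) {f : ℝ → ℝ}
    (h : ConcaveOn ℝ (Set.Icc 0 T) f) (hf0 : f 0 = T) (hfT : f T = 0)
    {x : ℝ} (hx : x ∈ Set.Icc 0 T) : T - x ≤ f x := by
  set t := x / T with ht
  have ht0 : 0 ≤ t := div_nonneg hx.1 hT.le
  have ht1 : t ≤ 1 := by rw [ht, div_le_one hT]; exact hx.2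
  have := h.2 (Set.left_mem_Icc.2 hT.le) (Set.right_mem_Icc.2 hT.le)
    (show (0:ℝ) ≤ 1 - t by linarith) ht0 (by ring)
  have harg : (1 - t) • (0 : ℝ) + t • T = x := by
    simp only [smul_eq_mul, mul_zero, zero_add]
    rw [ht]; field_simp
  rw [harg] at this
  simp only [smul_eq_mul, hf0, hfT, mul_zero, add_zero] at this
  have htT : t * T = x := by rw [ht]; field_simp
  nlinarith [this, htT]

/-- Bounds and endpoint values of `g a = f (i₀ - a) - f (T - a)` on `[0, i₀]`. -/
theorem stmt_5 (T : ℝ) (hT : 0 < T) (f : ℝ → ℝ)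
    (hconc : ConcaveOn ℝ (Set.Icc 0 T) f)
    (hf0 : f 0 = T) (hfT : f T = 0)
    (i₀ : ℝ) (hi₀ : 0 < i₀) (hi₀T : i₀ < T) :
    (∀ a ∈ Set.Icc (0 : ℝ) i₀,
        T - f (T - i₀) ≤ f (i₀ - a) - f (T - a) ∧
        f (i₀ - a) - f (T - a) ≤ f i₀) ∧
    f (i₀ - 0) - f (T - 0) = f i₀ ∧
    f (i₀ - i₀) - f (T - i₀) = T - f (T - i₀) ∧
    T - f (T - i₀) ≤ T - i₀ ∧ T - i₀ ≤ f i₀ := by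
  refine ⟨fun a ha => ?_, by simp [hfT], by simp [hf0], ?_, ?_⟩
  · obtain ⟨ha0, hai⟩ := ha
    constructor
    · have h1 := concave_four hconc (x := 0) (y := T - i₀) (c := i₀ - a)
        (Set.mem_Icc.2 ⟨le_refl 0, hT.le⟩)
        (Set.mem_Icc.2 ⟨by linarith, by linarith⟩)
        (by linarith) (by linarith)
      have harg : T - i₀ + (i₀ - a) = T - a := by ring
      have harg2 : (0 : ℝ) + (i₀ - a) = i₀ - a := by ring
      rw [harg, harg2, hf0] at h1
      linarith
    · have h1 := concave_four hconc (x := i₀ - a) (y := T - a) (c := a)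
        (Set.mem_Icc.2 ⟨by linarith, by linarith⟩)
        (Set.mem_Icc.2 ⟨by linarith, by linarith⟩)
        (by linarith) ha0
      have harg : T - a + a = T := by ring
      have harg2 : i₀ - a + a = i₀ := by ring
      rw [harg, harg2, hfT] at h1
      linarith
  · have := chord_lb hT hconc hf0 hfT (x := T - i₀)
      (Set.mem_Icc.2 ⟨by linarith, by linarith⟩)
    linarith
  · have := chord_lb hT hconc hf0 hfT (x := i₀)
      (Set.mem_Icc.2 ⟨by linarith, by linarith⟩)
    linarith
end

section
/- Let T > 0 be a real number, let f : ℝ → ℝ be continuous on [0, T] and concave on [0, T] with f(0) = T and f(T) = 0, and let i₀ satisfy 0 < i₀ < T. Define g : [0, i₀] → ℝ by g(a) = f(i₀ − a) − f(T − a). Then the image of [0, i₀] under g is exactly the closed interval [T − f(T − i₀), f(i₀)]. -/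
/-- Four-point inequality for concave functions: if `x ≤ y` and `c ≥ 0`, then
`f x + f (y + c) ≤ f y + f (x + c)`. -/
lemma concave_four_point {s : Set ℝ} {f : ℝ → ℝ} (hconc : ConcaveOn ℝ s f)
    {x y c : ℝ} (hxy : x ≤ y) (hc : 0 ≤ c)
    (hx : x ∈ s) (hyc : y + c ∈ s) :
    f x + f (y + c) ≤ f y + f (x + c) := by
  rcases eq_or_lt_of_le (add_le_add hxy hc : x + 0 ≤ y + c) with h | h
  · have hx' : x = y := le_antisymm hxy (by linarith [h])
    have hc' : c = 0 := le_antisymm (by linarith [h, hx']) hc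
    simp [hx', hc']
  have hpos : 0 < y + c - x := by linarith
  set μ : ℝ := c / (y + c - x) with hμ
  have hμ0 : 0 ≤ μ := div_nonneg hc hpos.le
  have hμ1 : μ ≤ 1 := by
    rw [hμ, div_le_one hpos]; linarith
  have key : ∀ p q : ℝ, p ∈ s → q ∈ s → μ • p + (1 - μ) • q = μ * p + (1 - μ) * q := by
    intro p q _ _; simp [smul_eq_mul]
  have e1 : μ * x + (1 - μ) * (y + c) = y := by
    field_simp [hμ]; rw [hμ]; field_simp; ring
  have e2 : (1 - μ) * x + μ * (y + c) = x + c := by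
    field_simp [hμ]; rw [hμ]; field_simp; ring
  have hab1 : μ + (1 - μ) = 1 := by ring
  have hab2 : (1 - μ) + μ = 1 := by ring
  have hμ0' : (0:ℝ) ≤ 1 - μ := by linarith
  have h1 := hconc.2 hx hyc hμ0 hμ0' hab1
  have h2 := hconc.2 hx hyc hμ0' hμ0 hab2
  simp only [smul_eq_mul] at h1 h2
  rw [e1] at h1
  rw [e2] at h2
  nlinarith [h1, h2]

/-- The range of `g a = f (i₀ - a) - f (T - a)` over `[0, i₀]` is exactly
the interval `[T - f (T - i₀), f i₀]`. -/
theorem stmt_6 (T : ℝ) (hT : 0 < T) (f : ℝ → ℝ)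
    (hcont : ContinuousOn f (Set.Icc 0 T))
    (hconc : ConcaveOn ℝ (Set.Icc 0 T) f)
    (hf0 : f 0 = T) (hfT : f T = 0)
    (i₀ : ℝ) (hi₀ : 0 < i₀) (hi₀T : i₀ < T) :
    (fun a : ℝ => f (i₀ - a) - f (T - a)) '' Set.Icc 0 i₀ =
      Set.Icc (T - f (T - i₀)) (f i₀) := by
  set g : ℝ → ℝ := fun a => f (i₀ - a) - f (T - a) with hg
  have hmem1 : ∀ a ∈ Set.Icc (0:ℝ) i₀, i₀ - a ∈ Set.Icc (0:ℝ) T := by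
    intro a ha; exact ⟨by linarith [ha.2], by linarith [ha.1]⟩
  have hmem2 : ∀ a ∈ Set.Icc (0:ℝ) i₀, T - a ∈ Set.Icc (0:ℝ) T := by
    intro a ha; exact ⟨by linarith [ha.2], by linarith [ha.1]⟩
  have hgcont : ContinuousOn g (Set.Icc 0 i₀) := by
    apply ContinuousOn.sub
    · exact hcont.comp (by fun_prop) hmem1
    · exact hcont.comp (by fun_prop) hmem2
  have hg0 : g 0 = f i₀ := by simp [hg, hfT]
  have hgi : g i₀ = T - f (T - i₀) := by simp [hg, hf0]
  have hub : ∀ a ∈ Set.Icc (0:ℝ) i₀, g a ≤ f i₀ := by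
    intro a ha
    have := concave_four_point hconc (x := i₀ - a) (y := i₀) (c := T - i₀)
      (by linarith [ha.1]) (by linarith) (hmem1 a ha) (by constructor <;> linarith)
    simp only [hg]
    have h1 : i₀ + (T - i₀) = T := by ring
    have h2 : i₀ - a + (T - i₀) = T - a := by ring
    rw [h1, h2] at this
    linarith [this]
  have hlb : ∀ a ∈ Set.Icc (0:ℝ) i₀, T - f (T - i₀) ≤ g a := by
    intro a ha
    have := concave_four_point hconc (x := (0:ℝ)) (y := i₀ - a) (c := T - i₀)
      (by linarith [ha.2]) (by linarith) (by constructor <;> linarith)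
      (by constructor <;> [linarith [ha.2]; linarith [ha.1]])
    simp only [zero_add] at this
    have h2 : i₀ - a + (T - i₀) = T - a := by ring
    rw [h2] at this
    simp only [hg]
    linarith [this]
  apply Set.Subset.antisymm
  · rintro _ ⟨a, ha, rfl⟩
    exact ⟨hlb a ha, hub a ha⟩
  · have := intermediate_value_Icc' (le_of_lt hi₀) hgcont
    rw [hg0, hgi] at this
    exact this
end
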